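/- arXiv:2111.03885 — 4 statements merged into one kernel-verified Lean document; each statement's English description precedes it below -/
import Mathlib

section
/- Swap lemma: let p_1, …, p_m ∈ [0,1], let Θ_1, …, Θ_m be independent Bernoulli random variables with P(Θ_i = 1) = p_i. Let δ ∈ {0,1}^m and suppose there are indices j, ℓ with p_j < p_ℓ, δ_j = 0, and δ_ℓ = 1. Define δ^new ∈ {0,1}^m by δ^new_j = 1, δ^new_ℓ = 0, and δ^new_i = δ_i for all other i. Then (a) Σ_i (1−p_i)δ^new_i ≥ Σ_i (1−p_i)δ_i, and (b) for every real t, P(Σ_i Θ_i δ^new_i > t) ≤ P(Σ_i Θ_i δ_i > t). -/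
open MeasureTheory ProbabilityTheory Finset

private lemma ennreal_rearrange {a b qj ql : ENNReal} (ha : a ≤ 1) (hb : b ≤ a)
    (hq : qj ≤ ql) (hl1 : ql ≤ 1) :
    a * qj + b * (1 - qj) ≤ a * ql + b * (1 - ql) := by
  have hqj1 : qj ≤ 1 := hq.trans hl1
  have hb1 : b ≤ 1 := hb.trans ha
  have hfin : ∀ x : ENNReal, x ≤ 1 → x ≠ ⊤ :=
    fun x hx => (hx.trans_lt ENNReal.one_lt_top).ne
  have key : b * ql + a * qj ≤ b * qj + a * ql := by
    obtain ⟨d, rfl⟩ := exists_add_of_le hb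
    obtain ⟨r, rfl⟩ := exists_add_of_le hq
    have : b * qj + (b + d) * (qj + r) = (b * (qj + r) + (b + d) * qj) + d * r := by ring
    rw [this]
    exact le_self_add
  have hc : (b * qj + b * ql) ≠ ⊤ := by
    refine ENNReal.add_ne_top.2 ⟨?_, ?_⟩ <;>
      exact ENNReal.mul_ne_top (hfin _ hb1) (hfin _ (by first | exact hqj1 | exact hl1))
  rw [← ENNReal.add_le_add_iff_right hc]
  have e1 : a * qj + b * (1 - qj) + (b * qj + b * ql)
      = (b * ql + a * qj) + (b * (1 - qj) + b * qj) := by ring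
  have e2 : a * ql + b * (1 - ql) + (b * qj + b * ql)
      = (b * qj + a * ql) + (b * (1 - ql) + b * ql) := by ring
  have e3 : b * (1 - qj) + b * qj = b := by
    rw [← mul_add, tsub_add_cancel_of_le hqj1, mul_one]
  have e4 : b * (1 - ql) + b * ql = b := by
    rw [← mul_add, tsub_add_cancel_of_le hl1, mul_one]
  rw [e1, e2, e3, e4]
  exact add_le_add_left key b

private lemma swap_aux {Ω : Type*} [MeasureSpace Ω]
    [IsProbabilityMeasure (ℙ : Measure Ω)]
    (S X : Ω → ℝ) (hS : Measurable S) (hXm : Measurable X)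
    (hX01 : ∀ ω, X ω = 0 ∨ X ω = 1)
    (hind : IndepFun S X ℙ) (t : ℝ) :
    ℙ {ω | S ω + X ω > t}
      = ℙ (S ⁻¹' Set.Ioi (t - 1)) * ℙ (X ⁻¹' {1})
        + ℙ (S ⁻¹' Set.Ioi t) * ℙ (X ⁻¹' {0}) := by
  have hset : {ω | S ω + X ω > t}
      = (S ⁻¹' Set.Ioi (t - 1) ∩ X ⁻¹' {1}) ∪ (S ⁻¹' Set.Ioi t ∩ X ⁻¹' {0}) := by
    ext ω
    simp only [Set.mem_setOf_eq, Set.mem_union, Set.mem_inter_iff, Set.mem_preimage,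
      Set.mem_Ioi, Set.mem_singleton_iff, gt_iff_lt]
    rcases hX01 ω with h | h
    · rw [h]
      constructor
      · intro hω; exact Or.inr ⟨by linarith, rfl⟩
      · rintro (⟨h1, h2⟩ | ⟨h1, h2⟩)
        · exact absurd h2 (by norm_num)
        · linarith
    · rw [h]
      constructor
      · intro hω; exact Or.inl ⟨by linarith, rfl⟩
      · rintro (⟨h1, h2⟩ | ⟨h1, h2⟩)
        · linarith
        · exact absurd h2 (by norm_num)
  have hdisj : Disjoint (S ⁻¹' Set.Ioi (t - 1) ∩ X ⁻¹' {1})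
      (S ⁻¹' Set.Ioi t ∩ X ⁻¹' {0}) := by
    rw [Set.disjoint_left]
    rintro ω ⟨-, h1⟩ ⟨-, h0⟩
    simp only [Set.mem_preimage, Set.mem_singleton_iff] at h1 h0
    rw [h1] at h0; norm_num at h0
  rw [hset, measure_union hdisj ((hS measurableSet_Ioi).inter (hXm (measurableSet_singleton _))),
    hind.measure_inter_preimage_eq_mul _ _ measurableSet_Ioi (measurableSet_singleton _),
    hind.measure_inter_preimage_eq_mul _ _ measurableSet_Ioi (measurableSet_singleton _)]

/-- **Swap lemma**: with `Θ₁, …, Θ_m` independent Bernoulli(pᵢ), if `δ` has `δⱼ = 0`,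
`δ_ℓ = 1` and `pⱼ < p_ℓ`, then swapping (`δ^new_j = 1`, `δ^new_ℓ = 0`, equal elsewhere)
gives (a) `Σ (1−pᵢ)δ^newᵢ ≥ Σ (1−pᵢ)δᵢ`, and (b) for every real `t`,
`P(Σ Θᵢ δ^newᵢ > t) ≤ P(Σ Θᵢ δᵢ > t)`. -/
theorem swap_lemma {Ω : Type*} [MeasureSpace Ω]
    [IsProbabilityMeasure (ℙ : Measure Ω)]
    (m : ℕ) (p : Fin m → ℝ) (hp : ∀ i, p i ∈ Set.Icc (0 : ℝ) 1)
    (Θ : Fin m → Ω → Bool) (hΘm : ∀ i, Measurable (Θ i))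
    (hΘp : ∀ i, ℙ {ω | Θ i ω = true} = ENNReal.ofReal (p i))
    (hindep : iIndepFun Θ ℙ)
    (δ : Fin m → Bool) (j l : Fin m) (hpjl : p j < p l)
    (hδj : δ j = false) (hδl : δ l = true)
    (δnew : Fin m → Bool)
    (hδnew : δnew = Function.update (Function.update δ j true) l false) :
    ((∑ i, (1 - p i) * (if δnew i then (1 : ℝ) else 0)) ≥
        ∑ i, (1 - p i) * (if δ i then (1 : ℝ) else 0)) ∧
    ∀ t : ℝ,
      ℙ {ω | (∑ i, (if Θ i ω then (1 : ℝ) else 0) * (if δnew i then (1 : ℝ) else 0)) > t}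
        ≤ ℙ {ω | (∑ i, (if Θ i ω then (1 : ℝ) else 0) * (if δ i then (1 : ℝ) else 0)) > t} := by
  classical
  have hjl : j ≠ l := by
    intro h; rw [h, hδl] at hδj; exact Bool.noConfusion hδj
  have hδnj : δnew j = true := by
    simp [hδnew, Function.update_apply, hjl]
  have hδnl : δnew l = false := by
    simp [hδnew, Function.update_apply]
  have hδni : ∀ i, i ≠ j → i ≠ l → δnew i = δ i := by
    intro i hij hil
    simp [hδnew, Function.update_apply, hij, hil]
  constructor
  · -- part (a)
    have key : ∀ i, (1 - p i) * (if δnew i then (1 : ℝ) else 0)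
        = (1 - p i) * (if δ i then (1 : ℝ) else 0)
          + (if i = j then 1 - p j else 0) - (if i = l then 1 - p l else 0) := by
      intro i
      rcases eq_or_ne i l with rfl | hil
      · simp [hδnl, hδl, hjl.symm]
      rcases eq_or_ne i j with rfl | hij
      · simp [hδnj, hδj, hil]
      · simp [hδni i hij hil, hij, hil]
    have h1 : (∑ i, (1 - p i) * (if δnew i then (1 : ℝ) else 0))
        = (∑ i, (1 - p i) * (if δ i then (1 : ℝ) else 0)) + (1 - p j) - (1 - p l) := by
      simp_rw [key]
      rw [Finset.sum_sub_distrib, Finset.sum_add_distrib]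
      simp
    rw [ge_iff_le, h1]
    linarith
  · -- part (b)
    intro t
    set c : Fin m → ℝ := fun i => if i = j then 1 else if δ i then 1 else 0 with hc
    set h : Fin m → Ω → ℝ := fun i ω => (if Θ i ω then (1 : ℝ) else 0) * c i with hh
    have hhm : ∀ i, Measurable (h i) := fun i =>
      (measurable_from_top : Measurable (fun b : Bool => (if b then (1 : ℝ) else 0) * c i)).comp (hΘm i)
    have hind' : iIndepFun h ℙ :=
      hindep.comp (fun i (b : Bool) => (if b then (1 : ℝ) else 0) * c i)
        (fun i => measurable_from_top)
    set s : Finset (Fin m) := Finset.univ \ {j, l} with hs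
    set S : Ω → ℝ := fun ω => ∑ i ∈ s, h i ω with hS
    have hSsum : (∑ i ∈ s, h i) = S := by
      funext ω; rw [Finset.sum_apply]
    have hSm : Measurable S :=
      Finset.measurable_sum s (fun i _ => hhm i)
    have hjns : j ∉ s := by simp [hs]
    have hlns : l ∉ s := by simp [hs]
    have hindj : IndepFun S (h j) ℙ := by
      have := hind'.indepFun_finsetSum_of_notMem hhm hjns
      rwa [hSsum] at this
    have hindl : IndepFun S (h l) ℙ := by
      have := hind'.indepFun_finsetSum_of_notMem hhm hlns
      rwa [hSsum] at this
    have hcj : c j = 1 := by simp [hc]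
    have hcl : c l = 1 := by simp [hc, hjl.symm, hδl]
    have h01 : ∀ i, (∀ ω, h i ω = 0 ∨ h i ω = 1) → True := fun _ _ => trivial
    have hj01 : ∀ ω, h j ω = 0 ∨ h j ω = 1 := by
      intro ω; cases hb : Θ j ω <;> simp [hh, hb, hcj]
    have hl01 : ∀ ω, h l ω = 0 ∨ h l ω = 1 := by
      intro ω; cases hb : Θ l ω <;> simp [hh, hb, hcl]
    -- preimage measures
    have hpre1 : ∀ i : Fin m, c i = 1 → h i ⁻¹' {1} = {ω | Θ i ω = true} := by
      intro i hci
      ext ω; cases hb : Θ i ω <;> simp [hh, hb, hci]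
    have hpre0 : ∀ i : Fin m, c i = 1 → h i ⁻¹' {0} = {ω | Θ i ω = true}ᶜ := by
      intro i hci
      ext ω; cases hb : Θ i ω <;> simp [hh, hb, hci]
    have hmeasT : ∀ i : Fin m, MeasurableSet {ω | Θ i ω = true} := fun i =>
      hΘm i (measurableSet_singleton true)
    have hPj1 : ℙ (h j ⁻¹' {1}) = ENNReal.ofReal (p j) := by
      rw [hpre1 j hcj, hΘp j]
    have hPj0 : ℙ (h j ⁻¹' {0}) = 1 - ENNReal.ofReal (p j) := by
      rw [hpre0 j hcj, prob_compl_eq_one_sub (hmeasT j), hΘp j]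
    have hPl1 : ℙ (h l ⁻¹' {1}) = ENNReal.ofReal (p l) := by
      rw [hpre1 l hcl, hΘp l]
    have hPl0 : ℙ (h l ⁻¹' {0}) = 1 - ENNReal.ofReal (p l) := by
      rw [hpre0 l hcl, prob_compl_eq_one_sub (hmeasT l), hΘp l]
    -- splitting the sums
    have hsplit : ∀ (d : Fin m → Bool) ω,
        (∑ i, (if Θ i ω then (1 : ℝ) else 0) * (if d i then (1 : ℝ) else 0))
          = (∑ i ∈ s, (if Θ i ω then (1 : ℝ) else 0) * (if d i then (1 : ℝ) else 0))
            + ((if Θ j ω then (1 : ℝ) else 0) * (if d j then (1 : ℝ) else 0)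
              + (if Θ l ω then (1 : ℝ) else 0) * (if d l then (1 : ℝ) else 0)) := by
      intro d ω
      rw [show s = Finset.univ \ {j, l} from hs,
        ← Finset.sum_sdiff (Finset.subset_univ ({j, l} : Finset (Fin m))),
        Finset.sum_pair hjl]
    have hSs : ∀ ω, (∑ i ∈ s, (if Θ i ω then (1 : ℝ) else 0) * (if δ i then (1 : ℝ) else 0))
        = S ω := by
      intro ω
      refine Finset.sum_congr rfl fun i hi => ?_
      simp only [hs, Finset.mem_sdiff, Finset.mem_univ, Finset.mem_insert,
        Finset.mem_singleton, true_and] at hi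
      push_neg at hi
      simp [hh, hc, hi.1]
    have hSsnew : ∀ ω,
        (∑ i ∈ s, (if Θ i ω then (1 : ℝ) else 0) * (if δnew i then (1 : ℝ) else 0)) = S ω := by
      intro ω
      rw [← hSs ω]
      refine Finset.sum_congr rfl fun i hi => ?_
      simp only [hs, Finset.mem_sdiff, Finset.mem_univ, Finset.mem_insert,
        Finset.mem_singleton, true_and] at hi
      push_neg at hi
      rw [hδni i hi.1 hi.2]
    have hnew : ∀ ω,
        (∑ i, (if Θ i ω then (1 : ℝ) else 0) * (if δnew i then (1 : ℝ) else 0))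
          = S ω + h j ω := by
      intro ω
      rw [hsplit δnew ω, hSsnew ω, hδnj, hδnl]
      cases hb : Θ j ω <;> simp [hh, hb, hcj]
    have hold : ∀ ω,
        (∑ i, (if Θ i ω then (1 : ℝ) else 0) * (if δ i then (1 : ℝ) else 0))
          = S ω + h l ω := by
      intro ω
      rw [hsplit δ ω, hSs ω, hδj, hδl]
      cases hb : Θ l ω <;> simp [hh, hb, hcl]
    have hEnew : {ω | (∑ i, (if Θ i ω then (1 : ℝ) else 0) * (if δnew i then (1 : ℝ) else 0)) > t}
        = {ω | S ω + h j ω > t} := by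
      ext ω; rw [Set.mem_setOf_eq, Set.mem_setOf_eq, hnew ω]
    have hEold : {ω | (∑ i, (if Θ i ω then (1 : ℝ) else 0) * (if δ i then (1 : ℝ) else 0)) > t}
        = {ω | S ω + h l ω > t} := by
      ext ω; rw [Set.mem_setOf_eq, Set.mem_setOf_eq, hold ω]
    rw [hEnew, hEold,
      swap_aux S (h j) hSm (hhm j) hj01 hindj t,
      swap_aux S (h l) hSm (hhm l) hl01 hindl t,
      hPj1, hPj0, hPl1, hPl0]
    exact ennreal_rearrange prob_le_one
      (measure_mono (Set.preimage_mono (Set.Ioi_subset_Ioi (by linarith))))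
      (ENNReal.ofReal_le_ofReal hpjl.le)
      (ENNReal.ofReal_le_one.2 (hp l).2)
end

section
/- Randomization achieves exact level: let (Ω, ℱ, P) be a probability space, 𝒢 ⊆ ℱ a sub-σ-algebra, and A ⊆ B two events in ℱ. Let α ∈ [0,1] and suppose that almost surely P(A | 𝒢) ≤ α < P(B | 𝒢). Let U be a random variable uniformly distributed on [0,1] and independent of the σ-algebra generated by 𝒢 together with the indicators of A and B. Define the 𝒢-measurable weight W = (α − P(A | 𝒢)) / (P(B | 𝒢) − P(A | 𝒢)), and define the event C = A ∪ (B ∩ {U ≤ W}). Then P(C | 𝒢) = α almost surely, and consequently P(C) = α. -/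
open MeasureTheory ProbabilityTheory

lemma aux_indep_prob {Ω : Type*} {H : MeasurableSpace Ω} [F : MeasurableSpace Ω]
    {P : Measure Ω} [IsProbabilityMeasure P] (hH : H ≤ F)
    {U W : Ω → ℝ} (hUm : Measurable U)
    (hUdist : P.map U = volume.restrict (Set.Icc (0 : ℝ) 1))
    (hUindep : Indep (MeasurableSpace.comap U inferInstance) H P)
    (hWm : Measurable[H] W) (hW01 : ∀ᵐ ω ∂P, W ω ∈ Set.Icc (0:ℝ) 1)
    {D : Set Ω} (hD : MeasurableSet[H] D) :
    P (D ∩ {ω | U ω ≤ W ω}) = ∫⁻ ω in D, ENNReal.ofReal (W ω) ∂P := by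
  classical
  have hDF : MeasurableSet[F] D := hH _ hD
  set V : Ω → ℝ × ℝ := fun ω => (W ω, D.indicator (fun _ => (1:ℝ)) ω) with hV
  have hVH : Measurable[H] V := hWm.prodMk (measurable_const.indicator hD)
  have hVF : Measurable V := hVH.mono hH le_rfl
  have hWF : Measurable W := hWm.mono hH le_rfl
  have hindep : IndepFun V U P := by
    rw [IndepFun_iff_Indep]
    exact indep_of_indep_of_le_left hUindep.symm hVH.comap_le
  have hmap : P.map (fun ω => (V ω, U ω)) = (P.map V).prod (P.map U) :=
    (indepFun_iff_map_prod_eq_prod_map_map hVF.aemeasurable hUm.aemeasurable).mp hindep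
  set S : Set ((ℝ × ℝ) × ℝ) := {p | p.2 ≤ p.1.1} with hSdef
  have hS : MeasurableSet S := measurableSet_le measurable_snd measurable_fst.fst
  set g : (ℝ × ℝ) × ℝ → ENNReal := fun p => ENNReal.ofReal p.1.2 * S.indicator 1 p with hgdef
  have hg : Measurable g :=
    (measurable_fst.snd.ennreal_ofReal).mul (measurable_one.indicator hS)
  haveI : IsProbabilityMeasure (P.map U) := Measure.isProbabilityMeasure_map hUm.aemeasurable
  haveI : IsProbabilityMeasure (P.map V) := Measure.isProbabilityMeasure_map hVF.aemeasurable
  have hUle : MeasurableSet {ω | U ω ≤ W ω} := measurableSet_le hUm hWF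
  have step1 : ∫⁻ ω, g (V ω, U ω) ∂P = P (D ∩ {ω | U ω ≤ W ω}) := by
    have hpt : ∀ ω, g (V ω, U ω) = (D ∩ {ω | U ω ≤ W ω}).indicator 1 ω := by
      intro ω
      by_cases h1 : ω ∈ D <;> by_cases h2 : U ω ≤ W ω <;>
        simp [hgdef, hSdef, hV, Set.indicator_apply, h1, h2]
    simp_rw [hpt]
    exact lintegral_indicator_one (hDF.inter hUle)
  have step2 : ∫⁻ ω, g (V ω, U ω) ∂P = ∫⁻ p, g p ∂((P.map V).prod (P.map U)) := by
    rw [← hmap, lintegral_map hg (hVF.prodMk hUm)]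
  have step3 : ∫⁻ p, g p ∂((P.map V).prod (P.map U))
      = ∫⁻ v, ENNReal.ofReal v.2 * (P.map U) (Set.Iic v.1) ∂(P.map V) := by
    rw [lintegral_prod _ hg.aemeasurable]
    refine lintegral_congr fun v => ?_
    have : ∀ u : ℝ, g (v, u) = ENNReal.ofReal v.2 * (Set.Iic v.1).indicator 1 u := by
      intro u
      by_cases h : u ≤ v.1 <;> simp [hgdef, hSdef, Set.indicator_apply, h]
    simp_rw [this]
    rw [lintegral_const_mul _ (measurable_one.indicator measurableSet_Iic),
      lintegral_indicator_one measurableSet_Iic]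
  have hWae : ∀ᵐ v ∂(P.map V), v.1 ∈ Set.Icc (0:ℝ) 1 := by
    rw [ae_map_iff hVF.aemeasurable (measurable_fst measurableSet_Icc)]
    filter_upwards [hW01] with ω h using h
  have step4 : ∫⁻ v, ENNReal.ofReal v.2 * (P.map U) (Set.Iic v.1) ∂(P.map V)
      = ∫⁻ v, ENNReal.ofReal v.2 * ENNReal.ofReal v.1 ∂(P.map V) := by
    refine lintegral_congr_ae ?_
    filter_upwards [hWae] with v hv
    have h01 : (0:ℝ) ≤ v.1 ∧ v.1 ≤ 1 := hv
    have : Set.Iic v.1 ∩ Set.Icc (0:ℝ) 1 = Set.Icc 0 v.1 := by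
      ext x
      simp only [Set.mem_inter_iff, Set.mem_Iic, Set.mem_Icc]
      constructor
      · rintro ⟨h1, h2, h3⟩; exact ⟨h2, h1⟩
      · rintro ⟨h1, h2⟩; exact ⟨h2, h1, h2.trans h01.2⟩
    rw [hUdist, Measure.restrict_apply measurableSet_Iic, this, Real.volume_Icc, sub_zero]
  have step5 : ∫⁻ v, ENNReal.ofReal v.2 * ENNReal.ofReal v.1 ∂(P.map V)
      = ∫⁻ ω in D, ENNReal.ofReal (W ω) ∂P := by
    rw [lintegral_map (f := fun v : ℝ × ℝ => ENNReal.ofReal v.2 * ENNReal.ofReal v.1) (measurable_snd.ennreal_ofReal.mul measurable_fst.ennreal_ofReal) hVF]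
    have hpt : ∀ ω, ENNReal.ofReal ((V ω).2) * ENNReal.ofReal ((V ω).1)
        = D.indicator (fun ω => ENNReal.ofReal (W ω)) ω := by
      intro ω
      by_cases h : ω ∈ D <;> simp [hV, Set.indicator_apply, h]
    simp_rw [hpt]
    exact lintegral_indicator hDF _
  rw [← step1, step2, step3, step4, step5]

open MeasureTheory ProbabilityTheory

lemma aux_main {Ω : Type*} {G : MeasurableSpace Ω} [F : MeasurableSpace Ω]
    {P : Measure Ω} [IsProbabilityMeasure P] (hG : G ≤ F)
    {A B : Set Ω} (hA : MeasurableSet A) (hB : MeasurableSet B) (hAB : A ⊆ B)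
    {α : ℝ}
    (hcond : ∀ᵐ ω ∂P, (P[A.indicator (fun _ => (1:ℝ)) | G]) ω ≤ α ∧
      α < (P[B.indicator (fun _ => (1:ℝ)) | G]) ω)
    {U : Ω → ℝ} (hUm : Measurable U)
    (hUdist : P.map U = volume.restrict (Set.Icc (0 : ℝ) 1))
    (hUindep : Indep (MeasurableSpace.comap U inferInstance)
        (G ⊔ MeasurableSpace.generateFrom {A, B}) P)
    {W : Ω → ℝ}
    (hW : W = fun ω => (α - (P[A.indicator (fun _ => (1:ℝ)) | G]) ω) /
        ((P[B.indicator (fun _ => (1:ℝ)) | G]) ω - (P[A.indicator (fun _ => (1:ℝ)) | G]) ω))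
    {C : Set Ω} (hC : C = A ∪ (B ∩ {ω | U ω ≤ W ω})) :
    (fun _ => α) =ᵐ[P] P[C.indicator (fun _ => (1:ℝ)) | G] ∧ P C = ENNReal.ofReal α := by
  classical
  set fA : Ω → ℝ := P[A.indicator (fun _ => (1:ℝ)) | G] with hfA
  set fB : Ω → ℝ := P[B.indicator (fun _ => (1:ℝ)) | G] with hfB
  have hgen : MeasurableSpace.generateFrom {A, B} ≤ F := by
    refine MeasurableSpace.generateFrom_le ?_
    rintro s (rfl | rfl)
    exacts [hA, hB]
  have hH : (G ⊔ MeasurableSpace.generateFrom {A, B}) ≤ F := sup_le hG hgen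
  haveI : IsFiniteMeasure (P.trim hG) := isFiniteMeasure_trim hG
  have hfAsm : StronglyMeasurable[G] fA := stronglyMeasurable_condExp
  have hfBsm : StronglyMeasurable[G] fB := stronglyMeasurable_condExp
  have hWmG : Measurable[G] W := by
    rw [hW]
    exact (measurable_const.sub hfAsm.measurable).div (hfBsm.measurable.sub hfAsm.measurable)
  have hWsm : StronglyMeasurable[G] W := hWmG.stronglyMeasurable
  have hWmF : Measurable W := hWmG.mono hG le_rfl
  have hW01 : ∀ᵐ ω ∂P, W ω ∈ Set.Icc (0:ℝ) 1 := by
    filter_upwards [hcond] with ω hω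
    obtain ⟨h1, h2⟩ := hω
    have hd : 0 < fB ω - fA ω := by linarith
    have hWω : W ω = (α - fA ω) / (fB ω - fA ω) := by rw [hW]
    rw [hWω]
    exact ⟨div_nonneg (by linarith) hd.le, (div_le_one hd).mpr (by linarith)⟩
  have hWnorm : ∀ᵐ ω ∂P, ‖W ω‖ ≤ 1 := by
    filter_upwards [hW01] with ω h
    rw [Real.norm_eq_abs, abs_le]
    exact ⟨by linarith [h.1], h.2⟩
  have hWmul : ∀ᵐ ω ∂P, W ω * (fB ω - fA ω) = α - fA ω := by
    filter_upwards [hcond] with ω hω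
    obtain ⟨h1, h2⟩ := hω
    have hd : fB ω - fA ω ≠ 0 := (by linarith : (0:ℝ) < fB ω - fA ω).ne'
    have hWω : W ω = (α - fA ω) / (fB ω - fA ω) := by rw [hW]
    rw [hWω, div_mul_cancel₀ _ hd]
  have hintA : Integrable (A.indicator fun _ => (1:ℝ)) P := (integrable_const 1).indicator hA
  have hintB : Integrable (B.indicator fun _ => (1:ℝ)) P := (integrable_const 1).indicator hB
  have hBA : MeasurableSet (B \ A) := hB.diff hA
  have hintBA : Integrable ((B \ A).indicator fun _ => (1:ℝ)) P :=
    (integrable_const 1).indicator hBA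
  have hcondBA : P[(B \ A).indicator (fun _ => (1:ℝ)) | G] =ᵐ[P] fun ω => fB ω - fA ω := by
    have hsub : (B \ A).indicator (fun _ => (1:ℝ))
        = B.indicator (fun _ => (1:ℝ)) - A.indicator (fun _ => (1:ℝ)) := by
      funext ω
      by_cases ha : ω ∈ A
      · simp [Set.indicator_apply, ha, hAB ha]
      · by_cases hb : ω ∈ B <;> simp [Set.indicator_apply, ha, hb]
    rw [hsub]
    exact condExp_sub hintB hintA G
  have hWint : Integrable W P :=
    Integrable.mono' (integrable_const (1:ℝ)) hWmF.aestronglyMeasurable hWnorm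
  have hUle : MeasurableSet {ω | U ω ≤ W ω} := measurableSet_le hUm hWmF
  have hCF : MeasurableSet C := by rw [hC]; exact hA.union (hB.inter hUle)
  have hintC : Integrable (C.indicator fun _ => (1:ℝ)) P := (integrable_const 1).indicator hCF
  have hAH : MeasurableSet[G ⊔ MeasurableSpace.generateFrom {A, B}] A :=
    (le_sup_right : MeasurableSpace.generateFrom {A, B} ≤ _) _
      (MeasurableSpace.measurableSet_generateFrom (by simp))
  have hBH : MeasurableSet[G ⊔ MeasurableSpace.generateFrom {A, B}] B :=
    (le_sup_right : MeasurableSpace.generateFrom {A, B} ≤ _) _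
      (MeasurableSpace.measurableSet_generateFrom (by simp))
  have main : ∀ s : Set Ω, MeasurableSet[G] s →
      ∫ ω in s, (fun _ => α) ω ∂P = ∫ ω in s, C.indicator (fun _ => (1:ℝ)) ω ∂P := by
    intro s hs
    have hsF : MeasurableSet s := hG _ hs
    have hsH : MeasurableSet[G ⊔ MeasurableSpace.generateFrom {A, B}] s :=
      (le_sup_left : G ≤ _) _ hs
    set D := (B \ A) ∩ s with hD
    have hDH : MeasurableSet[G ⊔ MeasurableSpace.generateFrom {A, B}] D :=
      (hBH.diff hAH).inter hsH
    have hDF : MeasurableSet D := hH _ hDH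
    have hkey := aux_indep_prob hH hUm hUdist hUindep
      (hWmG.mono le_sup_left le_rfl) hW01 hDH
    have hsplit : C ∩ s = (A ∩ s) ∪ (D ∩ {ω | U ω ≤ W ω}) := by
      ext ω
      constructor
      · rintro ⟨hc, hsω⟩
        rw [hC] at hc
        rcases hc with ha | ⟨hb, hu⟩
        · exact Or.inl ⟨ha, hsω⟩
        · by_cases ha : ω ∈ A
          · exact Or.inl ⟨ha, hsω⟩
          · exact Or.inr ⟨⟨⟨hb, ha⟩, hsω⟩, hu⟩
      · rintro (⟨ha, hsω⟩ | ⟨⟨⟨hb, ha⟩, hsω⟩, hu⟩)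
        · exact ⟨by rw [hC]; exact Or.inl ha, hsω⟩
        · exact ⟨by rw [hC]; exact Or.inr ⟨hb, hu⟩, hsω⟩
    have hdisj : Disjoint (A ∩ s) (D ∩ {ω | U ω ≤ W ω}) := by
      rw [Set.disjoint_left]
      rintro ω ⟨ha, -⟩ ⟨⟨⟨-, hna⟩, -⟩, -⟩
      exact hna ha
    have hmeas : P (C ∩ s) = P (A ∩ s) + P (D ∩ {ω | U ω ≤ W ω}) := by
      rw [hsplit]
      exact measure_union hdisj (hDF.inter hUle)
    have hWD0 : 0 ≤ ∫ ω in D, W ω ∂P := by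
      refine integral_nonneg_of_ae (ae_restrict_of_ae ?_)
      filter_upwards [hW01] with ω h using h.1
    have hlD : P (D ∩ {ω | U ω ≤ W ω}) = ENNReal.ofReal (∫ ω in D, W ω ∂P) := by
      rw [hkey, ← ofReal_integral_eq_lintegral_ofReal hWint.restrict
        (ae_restrict_of_ae (hW01.mono fun ω h => h.1))]
    have hintWBA : Integrable (W * (B \ A).indicator (fun _ => (1:ℝ))) P :=
      hintBA.bdd_mul hWmF.aestronglyMeasurable hWnorm
    have e1 : ∫ ω in D, W ω ∂P
        = ∫ ω in s, (W * (B \ A).indicator (fun _ => (1:ℝ))) ω ∂P := by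
      have hpt : ∀ ω, (W * (B \ A).indicator (fun _ => (1:ℝ))) ω = (B \ A).indicator W ω := by
        intro ω
        by_cases h : ω ∈ B \ A <;> simp [Set.indicator_apply, h]
      simp_rw [hpt]
      rw [setIntegral_indicator hBA, Set.inter_comm]
    have hpull : P[W * (B \ A).indicator (fun _ => (1:ℝ)) | G] =ᵐ[P]
        fun ω => α - fA ω := by
      refine (condExp_stronglyMeasurable_mul_of_bound hG hWsm hintBA 1 hWnorm).trans ?_
      have h1 : (W * P[(B \ A).indicator (fun _ => (1:ℝ)) | G]) =ᵐ[P]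
          fun ω => W ω * (fB ω - fA ω) := by
        filter_upwards [hcondBA] with ω h
        rw [Pi.mul_apply, h]
      exact h1.trans hWmul
    have e2 : ∫ ω in s, (W * (B \ A).indicator (fun _ => (1:ℝ))) ω ∂P
        = ∫ ω in s, (α - fA ω) ∂P := by
      rw [← setIntegral_condExp hG hintWBA hs]
      exact setIntegral_congr_ae hsF (hpull.mono fun ω h _ => h)
    have e3 : ∫ ω in s, (α - fA ω) ∂P = α * (P s).toReal - (P (A ∩ s)).toReal := by
      rw [integral_sub (integrable_const α).integrableOn integrable_condExp.integrableOn]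
      have h1 : ∫ _ in s, α ∂P = (P s).toReal * α := by
        rw [setIntegral_const, smul_eq_mul, measureReal_def]
      have h2 : ∫ ω in s, fA ω ∂P = (P (A ∩ s)).toReal := by
        rw [hfA, setIntegral_condExp hG hintA hs, setIntegral_indicator hA,
          setIntegral_const, smul_eq_mul, mul_one, measureReal_def, Set.inter_comm]
      rw [h1, h2, mul_comm]
    have lhs : ∫ ω in s, (fun _ => α) ω ∂P = (P s).toReal * α := by
      rw [setIntegral_const, smul_eq_mul, measureReal_def]
    have rhs : ∫ ω in s, C.indicator (fun _ => (1:ℝ)) ω ∂P = (P (C ∩ s)).toReal := by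
      rw [setIntegral_indicator hCF, setIntegral_const, smul_eq_mul, mul_one, measureReal_def, Set.inter_comm]
    rw [lhs, rhs, hmeas, ENNReal.toReal_add (measure_ne_top _ _) (measure_ne_top _ _), hlD,
      ENNReal.toReal_ofReal hWD0, e1, e2, e3]
    ring
  have hcondexp : (fun _ => α) =ᵐ[P] P[C.indicator (fun _ => (1:ℝ)) | G] :=
    ae_eq_condExp_of_forall_setIntegral_eq hG hintC
      (fun s _ _ => (integrable_const α).integrableOn)
      (fun s hs _ => main s hs)
      (stronglyMeasurable_const.aestronglyMeasurable)
  refine ⟨hcondexp, ?_⟩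
  have huniv := main Set.univ MeasurableSet.univ
  rw [Measure.restrict_univ, integral_const, integral_indicator hCF, setIntegral_const] at huniv
  simp only [measureReal_def, measure_univ, ENNReal.toReal_one, one_smul, smul_eq_mul, mul_one] at huniv
  rw [one_mul] at huniv
  rw [huniv, ENNReal.ofReal_toReal (measure_ne_top P C)]

/-- The conditional probability `P(A | G)` of an event `A` given a sub-σ-algebra `G`,
i.e. the conditional expectation of the indicator of `A` given `G`, on a space whose
ambient σ-algebra is `F`. -/
noncomputable def condProb {Ω : Type*} (F G : MeasurableSpace Ω)
    (P : @Measure Ω F) (A : Set Ω) : Ω → ℝ :=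
  @MeasureTheory.condExp Ω ℝ G F _ _ P (A.indicator fun _ => (1 : ℝ))

/-- **Randomization achieves exact level**: let `G ⊆ F` be a sub-σ-algebra, `A ⊆ B`
events, `α ∈ [0,1]` with `P(A | G) ≤ α < P(B | G)` a.s., and `U` uniform on `[0,1]`
independent of the σ-algebra generated by `G` together with the indicators of `A` and
`B`.  With the `G`-measurable weight `W = (α − P(A|G)) / (P(B|G) − P(A|G))` and the
event `C = A ∪ (B ∩ {U ≤ W})`, one has `P(C | G) = α` a.s., and consequently
`P(C) = α`. -/
theorem randomization_exact_level {Ω : Type*} (F : MeasurableSpace Ω)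
    (P : @Measure Ω F) (hP : IsProbabilityMeasure P)
    (G : MeasurableSpace Ω) (hG : G ≤ F)
    (A B : Set Ω) (hA : MeasurableSet[F] A) (hB : MeasurableSet[F] B) (hAB : A ⊆ B)
    (α : ℝ) (hα : α ∈ Set.Icc (0 : ℝ) 1)
    (hcond : ∀ᵐ ω ∂P, condProb F G P A ω ≤ α ∧ α < condProb F G P B ω)
    (U : Ω → ℝ) (hUm : @Measurable Ω ℝ F _ U)
    (hUdist : @Measure.map Ω ℝ F _ U P = volume.restrict (Set.Icc (0 : ℝ) 1))
    (hUindep : @Indep Ω (MeasurableSpace.comap U inferInstance)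
        (G ⊔ MeasurableSpace.generateFrom {A, B}) F P)
    (W : Ω → ℝ)
    (hW : W = fun ω => (α - condProb F G P A ω) /
        (condProb F G P B ω - condProb F G P A ω))
    (C : Set Ω) (hC : C = A ∪ (B ∩ {ω | U ω ≤ W ω})) :
    (∀ᵐ ω ∂P, condProb F G P C ω = α) ∧ P C = ENNReal.ofReal α := by
  have h := aux_main (F := F) (P := P) hG hA hB hAB hcond hUm hUdist hUindep hW hC
  exact ⟨h.1.symm, h.2⟩
end

section
/- Geometric-mean binomial lower bound for the Poisson binomial tail: let p_1, …, p_n ∈ (0,1] and let X_1, …, X_n be independent Bernoulli random variables with P(X_i = 1) = p_i. Let Y be a binomial random variable with n trials and success probability (p_1 · p_2 ⋯ p_n)^{1/n} (the geometric mean of the p_i). Then Y is stochastically smaller than Σ_i X_i: for every real t, P(Y > t) ≤ P(Σ_i X_i > t). -/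
open MeasureTheory ProbabilityTheory Finset

section PBW

variable {ι : Type*} [DecidableEq ι]

/-- Tail "probability" polynomial of the Poisson binomial distribution. -/
noncomputable def pbW (s : Finset ι) (k : ℕ) (p : ι → ℝ) : ℝ :=
  ∑ A ∈ s.powerset, if k ≤ A.card then (∏ i ∈ A, p i) * ∏ i ∈ s \ A, (1 - p i) else 0

theorem pbW_congr {s : Finset ι} {k : ℕ} {p p' : ι → ℝ} (h : ∀ i ∈ s, p i = p' i) :
    pbW s k p = pbW s k p' := by
  unfold pbW
  refine Finset.sum_congr rfl fun A hA => ?_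
  rw [mem_powerset] at hA
  have h1 : (∏ i ∈ A, p i) = ∏ i ∈ A, p' i :=
    Finset.prod_congr rfl fun i hi => h i (hA hi)
  have h2 : (∏ i ∈ s \ A, (1 - p i)) = ∏ i ∈ s \ A, (1 - p' i) :=
    Finset.prod_congr rfl fun i hi => by rw [h i (Finset.sdiff_subset hi)]
  rw [h1, h2]

theorem pbW_zero (s : Finset ι) (p : ι → ℝ) : pbW s 0 p = 1 := by
  unfold pbW
  simp only [Nat.zero_le, if_true]
  rw [← Finset.prod_add]
  simp

theorem pbW_rec_insert {u : Finset ι} {a : ι} (ha : a ∉ u) (k : ℕ) (p : ι → ℝ) :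
    pbW (insert a u) (k + 1) p =
      p a * pbW u k p + (1 - p a) * pbW u (k + 1) p := by
  unfold pbW
  rw [Finset.sum_powerset_insert ha, Finset.mul_sum, Finset.mul_sum, add_comm]
  congr 1
  · refine Finset.sum_congr rfl fun A hA => ?_
    rw [mem_powerset] at hA
    have haA : a ∉ A := fun h => ha (hA h)
    have h1 : insert a u \ insert a A = u \ A := by
      ext x; simp only [mem_sdiff, mem_insert, not_or]
      constructor
      · rintro ⟨hx1 | hx1, hx2, hx3⟩
        · exact absurd hx1 hx2
        · exact ⟨hx1, hx3⟩
      · rintro ⟨hx1, hx2⟩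
        exact ⟨Or.inr hx1, fun h => ha (h ▸ hx1), hx2⟩
    rw [Finset.card_insert_of_notMem haA, h1, Finset.prod_insert haA]
    simp only [Nat.add_le_add_iff_right]
    split_ifs <;> ring
  · refine Finset.sum_congr rfl fun A hA => ?_
    rw [mem_powerset] at hA
    have haA : a ∉ A := fun h => ha (hA h)
    have h1 : insert a u \ A = insert a (u \ A) := by
      rw [Finset.insert_sdiff_of_notMem _ haA]
    rw [h1, Finset.prod_insert (by simp [ha])]
    split_ifs <;> ring

theorem pbW_rec {s : Finset ι} {a : ι} (ha : a ∈ s) (k : ℕ) (p : ι → ℝ) :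
    pbW s (k + 1) p =
      p a * pbW (s.erase a) k p + (1 - p a) * pbW (s.erase a) (k + 1) p := by
  conv_lhs => rw [← Finset.insert_erase ha]
  exact pbW_rec_insert (Finset.notMem_erase a s) k p

theorem pbW_nonneg {s : Finset ι} {k : ℕ} {p : ι → ℝ}
    (hp : ∀ i ∈ s, 0 ≤ p i ∧ p i ≤ 1) : 0 ≤ pbW s k p := by
  refine Finset.sum_nonneg fun A hA => ?_
  rw [mem_powerset] at hA
  split_ifs
  · refine mul_nonneg (Finset.prod_nonneg fun i hi => (hp i (hA hi)).1)
      (Finset.prod_nonneg fun i hi => ?_)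
    have := (hp i (Finset.sdiff_subset hi)).2; linarith
  · exact le_refl 0

theorem pbW_succ_le {s : Finset ι} {k : ℕ} {p : ι → ℝ}
    (hp : ∀ i ∈ s, 0 ≤ p i ∧ p i ≤ 1) : pbW s (k + 1) p ≤ pbW s k p := by
  refine Finset.sum_le_sum fun A hA => ?_
  rw [mem_powerset] at hA
  have hterm : 0 ≤ (∏ i ∈ A, p i) * ∏ i ∈ s \ A, (1 - p i) := by
    refine mul_nonneg (Finset.prod_nonneg fun i hi => (hp i (hA hi)).1)
      (Finset.prod_nonneg fun i hi => ?_)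
    have := (hp i (Finset.sdiff_subset hi)).2; linarith
  split_ifs with h1 h2 h2
  · exact le_refl _
  · omega
  · exact hterm
  · exact le_refl _

theorem pbW_antitone {s : Finset ι} {k k' : ℕ} (hk : k ≤ k') {p : ι → ℝ}
    (hp : ∀ i ∈ s, 0 ≤ p i ∧ p i ≤ 1) : pbW s k' p ≤ pbW s k p := by
  induction k' with
  | zero => simp_all
  | succ m ih =>
    rcases Nat.lt_or_ge k (m+1) with h | h
    · exact (pbW_succ_le hp).trans (ih (by omega))
    · have : k = m + 1 := by omega
      subst this; exact le_refl _

theorem pbW_le_one {s : Finset ι} {k : ℕ} {p : ι → ℝ}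
    (hp : ∀ i ∈ s, 0 ≤ p i ∧ p i ≤ 1) : pbW s k p ≤ 1 := by
  have := pbW_antitone (Nat.zero_le k) hp
  rwa [pbW_zero] at this

/-- Exchange lemma: decreasing the sum of two coordinates while keeping their
product fixed decreases the tail. -/
theorem pbW_exchange {s : Finset ι} {a b : ι} (ha : a ∈ s) (hb : b ∈ s) (hab : a ≠ b)
    {k : ℕ} {p p' : ι → ℝ}
    (hp : ∀ i ∈ s, 0 ≤ p i ∧ p i ≤ 1) (hp' : ∀ i ∈ s, 0 ≤ p' i ∧ p' i ≤ 1)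
    (heq : ∀ i ∈ s, i ≠ a → i ≠ b → p i = p' i)
    (hsum : p' a + p' b ≤ p a + p b) (hprod : p' a * p' b = p a * p b) :
    pbW s k p' ≤ pbW s k p := by
  rcases k with _ | k
  · rw [pbW_zero, pbW_zero]
  have hb' : b ∈ s.erase a := Finset.mem_erase.2 ⟨Ne.symm hab, hb⟩
  set e2 := (s.erase a).erase b with he2
  have he2sub : ∀ i ∈ e2, i ∈ s ∧ i ≠ a ∧ i ≠ b := by
    intro i hi
    rw [he2, Finset.mem_erase, Finset.mem_erase] at hi
    exact ⟨hi.2.2, hi.2.1, hi.1⟩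
  have hpe2 : ∀ i ∈ e2, 0 ≤ p i ∧ p i ≤ 1 := fun i hi => hp i (he2sub i hi).1
  have ht : ∀ j, pbW e2 j p' = pbW e2 j p := by
    intro j
    exact pbW_congr fun i hi => ((heq i (he2sub i hi).1 (he2sub i hi).2.1
      (he2sub i hi).2.2)).symm
  rcases k with _ | k
  · -- k = 1 case
    rw [pbW_rec ha 0 p, pbW_rec ha 0 p', pbW_rec hb' 0 p, pbW_rec hb' 0 p', ht 1]
    simp only [pbW_zero]
    set t1 := pbW e2 1 p with ht1
    have h0 : t1 ≤ 1 := pbW_le_one hpe2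
    nlinarith [hp a ha, hp b hb, hp' a ha, hp' b hb]
  · -- k ≥ 2 case
    rw [pbW_rec ha (k+1) p, pbW_rec ha (k+1) p', pbW_rec hb' k p, pbW_rec hb' k p',
      pbW_rec hb' (k+1) p, pbW_rec hb' (k+1) p', ht k, ht (k+1), ht (k+2)]
    set t0 := pbW e2 k p with ht0
    set t1 := pbW e2 (k+1) p with ht1v
    set t2 := pbW e2 (k+2) p with ht2v
    have h01 : t1 ≤ t0 := pbW_succ_le hpe2
    have h12 : t2 ≤ t1 := pbW_succ_le hpe2
    nlinarith [hp a ha, hp b hb, hp' a ha, hp' b hb]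

theorem pbW_geom_mean_le {q : ℝ} (hq0 : 0 < q) (hq1 : q ≤ 1) :
    ∀ (m : ℕ) (s : Finset ι), s.card = m → ∀ p : ι → ℝ,
      (∀ i ∈ s, 0 < p i ∧ p i ≤ 1) → (∏ i ∈ s, p i) = q ^ m →
      ∀ k, pbW s k (fun _ => q) ≤ pbW s k p := by
  intro m
  induction m with
  | zero =>
    intro s hs p _ _ k
    rw [Finset.card_eq_zero] at hs
    subst hs
    exact le_of_eq (pbW_congr fun i hi => absurd hi (Finset.notMem_empty i))
  | succ m ih =>
    intro s hs p hp hprodp k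
    have hsne : s.Nonempty := Finset.card_pos.1 (by omega)
    obtain ⟨a, ha, hamax⟩ := Finset.exists_max_image s p hsne
    obtain ⟨b, hb, hbmin⟩ := Finset.exists_min_image s p hsne
    have hp01 : ∀ i ∈ s, 0 ≤ p i ∧ p i ≤ 1 := fun i hi => ⟨(hp i hi).1.le, (hp i hi).2⟩
    by_cases hmm : p a = p b
    · -- all coordinates equal; then they all equal q
      have hall : ∀ i ∈ s, p i = p a :=
        fun i hi => le_antisymm (hamax i hi) (hmm ▸ hbmin i hi)
      have hprod' : p a ^ (m + 1) = q ^ (m + 1) := by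
        rw [← hprodp, Finset.prod_congr rfl hall, Finset.prod_const, hs]
      have hpaq : p a = q := by
        refine le_antisymm (le_of_pow_le_pow_left₀ (by omega) hq0.le hprod'.le)
          (le_of_pow_le_pow_left₀ (by omega) (hp a ha).1.le hprod'.ge)
      exact le_of_eq (pbW_congr fun i hi => by rw [hall i hi, hpaq])
    · have hab : a ≠ b := fun h => hmm (h ▸ rfl)
      -- q lies between the min and max coordinate
      have hpbq : p b ≤ q := by
        have h1 : p b ^ (m+1) ≤ q ^ (m+1) := by
          calc p b ^ (m+1) = ∏ _i ∈ s, p b := by rw [Finset.prod_const, hs]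
          _ ≤ ∏ i ∈ s, p i :=
            Finset.prod_le_prod (fun i _ => (hp b hb).1.le) (fun i hi => hbmin i hi)
          _ = q ^ (m+1) := hprodp
        exact le_of_pow_le_pow_left₀ (by omega) hq0.le h1
      have hqpa : q ≤ p a := by
        have h1 : q ^ (m+1) ≤ p a ^ (m+1) := by
          calc q ^ (m+1) = ∏ i ∈ s, p i := hprodp.symm
          _ ≤ ∏ _i ∈ s, p a :=
            Finset.prod_le_prod (fun i hi => (hp i hi).1.le) (fun i hi => hamax i hi)
          _ = p a ^ (m+1) := by rw [Finset.prod_const, hs]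
        exact le_of_pow_le_pow_left₀ (by omega) (hp a ha).1.le h1
      set c : ℝ := p a * p b / q with hc
      have hc0 : 0 < c := div_pos (mul_pos (hp a ha).1 (hp b hb).1) hq0
      have hc1 : c ≤ 1 := by
        rw [hc, div_le_one hq0]
        calc p a * p b ≤ 1 * q := by
              apply mul_le_mul (hp a ha).2 hpbq (hp b hb).1.le zero_le_one
        _ = q := one_mul q
      set p' : ι → ℝ := Function.update (Function.update p a q) b c with hp'def
      have hp'a : p' a = q := by
        rw [hp'def, Function.update_of_ne hab, Function.update_self]
      have hp'b : p' b = c := by rw [hp'def, Function.update_self]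
      have hp'other : ∀ i, i ≠ a → i ≠ b → p' i = p i := by
        intro i hia hib
        rw [hp'def, Function.update_of_ne hib, Function.update_of_ne hia]
      have hp' : ∀ i ∈ s, 0 < p' i ∧ p' i ≤ 1 := by
        intro i hi
        by_cases h1 : i = b
        · subst h1; rw [hp'b]; exact ⟨hc0, hc1⟩
        by_cases h2 : i = a
        · subst h2; rw [hp'a]; exact ⟨hq0, hq1⟩
        · rw [hp'other i h2 h1]; exact hp i hi
      have hqc : q * c = p a * p b := by
        rw [hc]; field_simp
      have hexch : pbW s k p' ≤ pbW s k p := by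
        refine pbW_exchange ha hb hab hp01
          (fun i hi => ⟨(hp' i hi).1.le, (hp' i hi).2⟩)
          (fun i _ hia hib => (hp'other i hia hib).symm) ?_ ?_
        · rw [hp'a, hp'b]
          nlinarith [mul_nonneg (sub_nonneg.2 hqpa) (sub_nonneg.2 hpbq)]
        · rw [hp'a, hp'b, hqc]
      -- product over the erased set
      have hprods' : (∏ i ∈ s, p' i) = q ^ (m + 1) := by
        rw [hp'def, Finset.prod_update_of_mem hb, Finset.sdiff_singleton_eq_erase,
          Finset.prod_update_of_mem (Finset.mem_erase.2 ⟨hab, ha⟩),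
          Finset.sdiff_singleton_eq_erase, Finset.erase_right_comm]
        have : (∏ i ∈ s, p i) = p a * (p b * ∏ i ∈ (s.erase a).erase b, p i) := by
          rw [Finset.mul_prod_erase _ _ (Finset.mem_erase.2 ⟨Ne.symm hab, hb⟩),
            Finset.mul_prod_erase _ _ ha]
        have h2 : c * (q * ∏ i ∈ (s.erase a).erase b, p i) = ∏ i ∈ s, p i := by
          rw [this]; rw [hc]; field_simp
        rw [h2, hprodp]
      have hprode : (∏ i ∈ s.erase a, p' i) = q ^ m := by
        have h1 : p' a * ∏ i ∈ s.erase a, p' i = q ^ (m+1) := by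
          rw [Finset.mul_prod_erase _ _ ha, hprods']
        rw [hp'a] at h1
        have : q ^ (m+1) = q * q ^ m := by ring
        rw [this] at h1
        exact mul_left_cancel₀ (ne_of_gt hq0) h1
      have hcarde : (s.erase a).card = m := by
        rw [Finset.card_erase_of_mem ha, hs]; omega
      have hpe' : ∀ i ∈ s.erase a, 0 < p' i ∧ p' i ≤ 1 :=
        fun i hi => hp' i (Finset.mem_of_mem_erase hi)
      have IH := ih (s.erase a) hcarde p' hpe' hprode
      rcases k with _ | k
      · rw [pbW_zero, pbW_zero]
      · have e1 : pbW s (k+1) (fun _ => q) =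
            q * pbW (s.erase a) k (fun _ => q) +
            (1 - q) * pbW (s.erase a) (k+1) (fun _ => q) := pbW_rec ha k _
        have e2 : pbW s (k+1) p' =
            q * pbW (s.erase a) k p' + (1 - q) * pbW (s.erase a) (k+1) p' := by
          have := pbW_rec ha k p'
          rwa [hp'a] at this
        rw [e1]
        refine le_trans ?_ hexch
        rw [e2]
        have h1 := IH k
        have h2 := IH (k+1)
        nlinarith [hq0, hq1]


theorem pbW_const_eq {n k : ℕ} (q : ℝ) :
    pbW (univ : Finset (Fin n)) k (fun _ => q) =
      ∑ j ∈ Finset.Icc k n, (n.choose j : ℝ) * q ^ j * (1 - q) ^ (n - j) := by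
  classical
  have h1 : pbW (univ : Finset (Fin n)) k (fun _ => q) =
      ∑ A ∈ (univ : Finset (Fin n)).powerset,
        (fun m => if k ≤ m then q ^ m * (1 - q) ^ (n - m) else 0) A.card := by
    unfold pbW
    refine Finset.sum_congr rfl fun A hA => ?_
    rw [mem_powerset] at hA
    rw [Finset.prod_const, Finset.prod_const, Finset.card_sdiff_of_subset hA, Finset.card_univ,
      Fintype.card_fin]
  rw [h1, Finset.sum_powerset_apply_card (fun m => if k ≤ m then q ^ m * (1 - q) ^ (n - m) else 0)]
  rw [Finset.card_univ, Fintype.card_fin]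
  have h2 : ∀ j ∈ Finset.range (n+1),
      (n.choose j) • (if k ≤ j then q ^ j * (1 - q) ^ (n - j) else 0) =
      (if k ≤ j then (n.choose j : ℝ) * q ^ j * (1 - q) ^ (n - j) else 0) := by
    intro j _
    rw [nsmul_eq_mul]
    split_ifs <;> ring
  rw [Finset.sum_congr rfl h2, ← Finset.sum_filter]
  refine Finset.sum_congr ?_ fun j _ => rfl
  ext j
  simp only [Finset.mem_filter, Finset.mem_range, Finset.mem_Icc]
  omega

theorem pbW_univ_eq {n k : ℕ} (p : Fin n → ℝ) :
    pbW (univ : Finset (Fin n)) k p =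
      ∑ A ∈ (univ : Finset (Fin n)).powerset.filter (fun A => k ≤ A.card),
        ∏ i, (if i ∈ A then p i else 1 - p i) := by
  classical
  rw [Finset.sum_filter]
  unfold pbW
  refine Finset.sum_congr rfl fun A hA => ?_
  rw [mem_powerset] at hA
  have h1 : (∏ i, (if i ∈ A then p i else 1 - p i)) =
      (∏ i ∈ A, p i) * ∏ i ∈ univ \ A, (1 - p i) := by
    rw [← Finset.prod_sdiff hA, mul_comm]
    congr 1
    · exact Finset.prod_congr rfl fun i hi => if_pos hi
    · exact Finset.prod_congr rfl fun i hi => if_neg (Finset.mem_sdiff.1 hi).2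
  rw [h1]

end PBW

/-- **Geometric-mean binomial lower bound for the Poisson binomial tail**: with
`p₁, …, p_n ∈ (0,1]`, `X₁, …, X_n` independent Bernoulli(pᵢ), and `Y` binomial with
`n` trials and success probability the geometric mean `(p₁⋯p_n)^{1/n}`, the variable
`Y` is stochastically smaller than `Σ Xᵢ`: for every real `t`,
`P(Y > t) ≤ P(Σ Xᵢ > t)`. -/
theorem binomial_geometric_mean_lower_bound {Ω : Type*} [MeasureSpace Ω]
    [IsProbabilityMeasure (ℙ : Measure Ω)]
    (n : ℕ) (hn : 0 < n) (p : Fin n → ℝ) (hp : ∀ i, p i ∈ Set.Ioc (0 : ℝ) 1)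
    (X : Fin n → Ω → Bool) (hXm : ∀ i, Measurable (X i))
    (hXp : ∀ i, ℙ {ω | X i ω = true} = ENNReal.ofReal (p i))
    (hindep : iIndepFun X ℙ)
    (q : ℝ) (hq : q = (∏ i, p i) ^ ((1 : ℝ) / n))
    (Y : Ω → ℕ) (hYm : Measurable Y)
    (hY : ∀ j : ℕ, ℙ {ω | Y ω = j}
        = ENNReal.ofReal ((n.choose j : ℝ) * q ^ j * (1 - q) ^ (n - j))) :
    ∀ t : ℝ,
      ℙ {ω | (Y ω : ℝ) > t} ≤ ℙ {ω | (∑ i, if X i ω then (1 : ℝ) else 0) > t} := by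
  classical
  -- basic facts about q
  have hprodpos : 0 < ∏ i, p i := Finset.prod_pos fun i _ => (hp i).1
  have hprodle1 : (∏ i, p i) ≤ 1 :=
    Finset.prod_le_one (fun i _ => (hp i).1.le) (fun i _ => (hp i).2)
  have hq0 : 0 < q := hq ▸ Real.rpow_pos_of_pos hprodpos _
  have hq1 : q ≤ 1 := by
    rw [hq]
    exact Real.rpow_le_one hprodpos.le hprodle1 (by positivity)
  have hqn : q ^ n = ∏ i, p i := by
    rw [hq, ← Real.rpow_natCast ((∏ i, p i) ^ ((1:ℝ)/n)) n, ← Real.rpow_mul hprodpos.le,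
      one_div, inv_mul_cancel₀ (Nat.cast_ne_zero.2 hn.ne'), Real.rpow_one]
  -- the real-valued sum is the cast of the natural-valued count
  have hcast : ∀ ω, (∑ i, if X i ω then (1:ℝ) else 0) =
      ((∑ i, if X i ω then (1:ℕ) else 0 : ℕ) : ℝ) := by
    intro ω
    rw [Nat.cast_sum]
    exact Finset.sum_congr rfl fun i _ => by split_ifs <;> simp
  -- the key inequality at natural thresholds
  have key : ∀ k : ℕ, ℙ {ω | k ≤ Y ω} ≤ ℙ {ω | k ≤ ∑ i, if X i ω then (1:ℕ) else 0} := by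
    intro k
    -- upper bound for the binomial tail
    have hYbound : ℙ {ω | k ≤ Y ω} ≤ ∑ j ∈ Finset.Icc k n,
        ENNReal.ofReal ((n.choose j : ℝ) * q ^ j * (1 - q) ^ (n - j)) := by
      have htail : ℙ {ω | n < Y ω} = 0 := by
        have hsub : {ω | n < Y ω} = ⋃ j : ℕ, {ω | Y ω = n + 1 + j} := by
          ext ω; simp only [Set.mem_setOf_eq, Set.mem_iUnion]
          constructor
          · intro h; exact ⟨Y ω - (n+1), by omega⟩
          · rintro ⟨j, hj⟩; omega
        rw [hsub]
        refine measure_iUnion_null fun j => ?_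
        rw [hY (n + 1 + j), Nat.choose_eq_zero_of_lt (by omega)]
        simp
      have hsub : {ω | k ≤ Y ω} ⊆
          (⋃ j ∈ Finset.Icc k n, {ω | Y ω = j}) ∪ {ω | n < Y ω} := by
        intro ω hω
        simp only [Set.mem_setOf_eq] at hω
        rcases Nat.lt_or_ge n (Y ω) with h | h
        · exact Or.inr h
        · exact Or.inl (Set.mem_biUnion (Finset.mem_Icc.2 ⟨hω, h⟩) rfl)
      calc ℙ {ω | k ≤ Y ω}
          ≤ ℙ ((⋃ j ∈ Finset.Icc k n, {ω | Y ω = j}) ∪ {ω | n < Y ω}) :=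
            measure_mono hsub
      _ ≤ ℙ (⋃ j ∈ Finset.Icc k n, {ω | Y ω = j}) + ℙ {ω | n < Y ω} :=
            measure_union_le _ _
      _ = ℙ (⋃ j ∈ Finset.Icc k n, {ω | Y ω = j}) := by rw [htail, add_zero]
      _ ≤ ∑ j ∈ Finset.Icc k n, ℙ {ω | Y ω = j} := measure_biUnion_finset_le _ _
      _ = _ := Finset.sum_congr rfl fun j _ => hY j
    -- lower bound for the Poisson binomial tail
    have hNbound : ∑ A ∈ (univ : Finset (Fin n)).powerset.filter (fun A => k ≤ A.card),
        ENNReal.ofReal (∏ i, (if i ∈ A then p i else 1 - p i))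
        ≤ ℙ {ω | k ≤ ∑ i, if X i ω then (1:ℕ) else 0} := by
      set E : Finset (Fin n) → Set Ω :=
        fun A => ⋂ i, X i ⁻¹' {decide (i ∈ A)} with hE
      have hEmeas : ∀ A, MeasurableSet (E A) :=
        fun A => MeasurableSet.iInter fun i => hXm i (measurableSet_singleton _)
      have hXi : ∀ (i : Fin n) (b : Bool),
          ℙ (X i ⁻¹' {b}) = ENNReal.ofReal (if b then p i else 1 - p i) := by
        intro i b
        have htrue : X i ⁻¹' {true} = {ω | X i ω = true} := by ext ω; simp
        cases b with
        | true => rw [htrue, hXp i]; simp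
        | false =>
          have hms : MeasurableSet {ω | X i ω = true} := by
            rw [← htrue]; exact hXm i (measurableSet_singleton true)
          have hfalse : X i ⁻¹' {false} = {ω | X i ω = true}ᶜ := by
            ext ω; simp
          rw [hfalse, prob_compl_eq_one_sub hms, hXp i, if_neg (by simp),
            ENNReal.ofReal_sub _ (hp i).1.le, ENNReal.ofReal_one]
      have hEprob : ∀ A : Finset (Fin n),
          ℙ (E A) = ENNReal.ofReal (∏ i, if i ∈ A then p i else 1 - p i) := by
        intro A
        have h1 : E A = ⋂ i ∈ (univ : Finset (Fin n)), X i ⁻¹' {decide (i ∈ A)} := by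
          simp [hE]
        rw [h1, hindep.measure_inter_preimage_eq_mul univ
          (fun i _ => measurableSet_singleton _),
          ENNReal.ofReal_prod_of_nonneg (fun i _ => by
            have := (hp i).1.le; have := (hp i).2; split_ifs <;> linarith)]
        refine Finset.prod_congr rfl fun i _ => ?_
        rw [hXi i]
        by_cases h : i ∈ A <;> simp [h]
      have hunion : (⋃ A ∈ (univ : Finset (Fin n)).powerset.filter (fun A => k ≤ A.card),
          E A) ⊆ {ω | k ≤ ∑ i, if X i ω then (1:ℕ) else 0} := by
        intro ω hω
        rw [Set.mem_iUnion₂] at hω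
        obtain ⟨A, hA, hmem⟩ := hω
        rw [Finset.mem_filter] at hA
        rw [hE, Set.mem_iInter] at hmem
        simp only [Set.mem_preimage, Set.mem_singleton_iff] at hmem
        simp only [Set.mem_setOf_eq]
        have h1 : (∑ i, if X i ω then (1:ℕ) else 0) = A.card := by
          have h2 : ∀ i, (if X i ω then (1:ℕ) else 0) = if i ∈ A then 1 else 0 := by
            intro i; rw [hmem i]; simp
          rw [Finset.sum_congr rfl fun i _ => h2 i, Finset.sum_ite_mem,
            Finset.univ_inter, Finset.sum_const, smul_eq_mul, mul_one]
        rw [h1]; exact hA.2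
      have hdisj : (((univ : Finset (Fin n)).powerset.filter
          (fun A => k ≤ A.card)) : Set (Finset (Fin n))).PairwiseDisjoint E := by
        intro A _ B _ hne
        rw [Function.onFun, Set.disjoint_left]
        intro ω hωA hωB
        rw [hE, Set.mem_iInter] at hωA hωB
        simp only [Set.mem_preimage, Set.mem_singleton_iff] at hωA hωB
        refine hne ?_
        ext i
        have := (hωA i).symm.trans (hωB i)
        simpa using this
      calc ∑ A ∈ (univ : Finset (Fin n)).powerset.filter (fun A => k ≤ A.card),
            ENNReal.ofReal (∏ i, (if i ∈ A then p i else 1 - p i))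
          = ∑ A ∈ (univ : Finset (Fin n)).powerset.filter (fun A => k ≤ A.card),
            ℙ (E A) := Finset.sum_congr rfl fun A _ => (hEprob A).symm
      _ = ℙ (⋃ A ∈ (univ : Finset (Fin n)).powerset.filter (fun A => k ≤ A.card), E A) :=
            (measure_biUnion_finset hdisj fun A _ => hEmeas A).symm
      _ ≤ _ := measure_mono hunion
    -- the middle (real, combinatorial) inequality
    have hmid : (∑ j ∈ Finset.Icc k n,
        ENNReal.ofReal ((n.choose j : ℝ) * q ^ j * (1 - q) ^ (n - j)))
        ≤ ∑ A ∈ (univ : Finset (Fin n)).powerset.filter (fun A => k ≤ A.card),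
        ENNReal.ofReal (∏ i, (if i ∈ A then p i else 1 - p i)) := by
      have h1 : (∑ j ∈ Finset.Icc k n,
          ENNReal.ofReal ((n.choose j : ℝ) * q ^ j * (1 - q) ^ (n - j)))
          = ENNReal.ofReal (pbW (univ : Finset (Fin n)) k (fun _ => q)) := by
        rw [pbW_const_eq, ENNReal.ofReal_sum_of_nonneg]
        intro j _
        have h2 : (0:ℝ) ≤ 1 - q := by linarith
        positivity
      have h2 : (∑ A ∈ (univ : Finset (Fin n)).powerset.filter (fun A => k ≤ A.card),
          ENNReal.ofReal (∏ i, (if i ∈ A then p i else 1 - p i)))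
          = ENNReal.ofReal (pbW (univ : Finset (Fin n)) k p) := by
        rw [pbW_univ_eq, ENNReal.ofReal_sum_of_nonneg]
        intro A _
        refine Finset.prod_nonneg fun i _ => ?_
        have := (hp i).1.le; have := (hp i).2
        split_ifs <;> linarith
      rw [h1, h2]
      refine ENNReal.ofReal_le_ofReal ?_
      refine pbW_geom_mean_le hq0 hq1 n univ ?_ p (fun i _ => hp i) ?_ k
      · rw [Finset.card_univ, Fintype.card_fin]
      · rw [hqn]
    exact hYbound.trans (hmid.trans hNbound)
  -- reduce the real threshold to a natural one
  intro t
  rcases lt_or_ge t 0 with ht | ht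
  · have h1 : {ω | (Y ω : ℝ) > t} = Set.univ :=
      Set.eq_univ_of_forall fun ω => lt_of_lt_of_le ht (Nat.cast_nonneg _)
    have h2 : {ω | (∑ i, if X i ω then (1:ℝ) else 0) > t} = Set.univ :=
      Set.eq_univ_of_forall fun ω => lt_of_lt_of_le ht
        (Finset.sum_nonneg fun i _ => by split_ifs <;> norm_num)
    rw [h1, h2]
  · set k : ℕ := ⌊t⌋₊ + 1 with hk
    have h1 : {ω | (Y ω : ℝ) > t} = {ω | k ≤ Y ω} := by
      ext ω
      simp only [Set.mem_setOf_eq, gt_iff_lt, hk]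
      rw [← Nat.floor_lt ht]
      omega
    have h2 : {ω | (∑ i, if X i ω then (1:ℝ) else 0) > t}
        = {ω | k ≤ ∑ i, if X i ω then (1:ℕ) else 0} := by
      ext ω
      simp only [Set.mem_setOf_eq, gt_iff_lt, hk, hcast ω]
      rw [← Nat.floor_lt ht]
      omega
    rw [h1, h2]
    exact key k
end

section
/- Strict likelihood comparison for exchangeable Gaussian exponents: let m ≥ 2 and let A be an m×m real matrix with constant diagonal A_{ii} = a and constant off-diagonal entries A_{ij} = b for i ≠ j, with b < a. Let μ < 0 and z ∈ ℝ^m with z_1 > z_2, and let θ, θ' ∈ {0,1}^m satisfy θ_1 = 0, θ_2 = 1, θ'_1 = 1, θ'_2 = 0, and θ_i = θ'_i for all i ≥ 3. Then exp{(−1/2)(z−μθ)ᵀA(z−μθ)} > exp{(−1/2)(z−μθ')ᵀA(z−μθ')}. -/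
lemma quad_form_eq {m : ℕ} (A : Matrix (Fin m) (Fin m) ℝ) (a b : ℝ)
    (hdiag : ∀ i, A i i = a) (hoff : ∀ i j, i ≠ j → A i j = b) (x : Fin m → ℝ) :
    dotProduct x (A.mulVec x)
      = (a - b) * ∑ i, x i ^ 2 + b * (∑ i, x i) ^ 2 := by
  have hrow : ∀ i, (A.mulVec x) i = (a - b) * x i + b * ∑ j, x j := by
    intro i
    have h1 : ∀ j ∈ Finset.univ, A i j * x j
        = (if j = i then (a - b) * x j else 0) + b * x j := by
      intro j _
      by_cases h : j = i
      · subst h; rw [hdiag]; simp; ring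
      · rw [hoff i j (Ne.symm h)]; simp [h]
    simp only [Matrix.mulVec, dotProduct]
    rw [Finset.sum_congr rfl h1, Finset.sum_add_distrib,
      Finset.sum_ite_eq' Finset.univ i (fun j => (a - b) * x j), ← Finset.mul_sum]
    simp
  simp only [dotProduct, hrow]
  have : ∀ i ∈ Finset.univ, x i * ((a - b) * x i + b * ∑ j, x j)
      = (a - b) * x i ^ 2 + (b * ∑ j, x j) * x i := by intro i _; ring
  rw [Finset.sum_congr rfl this, Finset.sum_add_distrib, ← Finset.mul_sum, ← Finset.mul_sum]
  ring

lemma sum_two {m : ℕ} (hm : 2 ≤ m) (g : Fin m → ℝ)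
    (hg : ∀ i : Fin m, 2 ≤ (i : ℕ) → g i = 0) :
    ∑ i, g i = g ⟨0, lt_of_lt_of_le (by norm_num) hm⟩ + g ⟨1, lt_of_lt_of_le (by norm_num) hm⟩ := by
  set i0 : Fin m := ⟨0, by omega⟩
  set i1 : Fin m := ⟨1, by omega⟩
  have h01 : i0 ≠ i1 := by simp [i0, i1, Fin.ext_iff]
  rw [← Finset.sum_subset (Finset.subset_univ ({i0, i1} : Finset (Fin m)))]
  · rw [Finset.sum_insert (by simp [h01]), Finset.sum_singleton]
  · intro i _ hi
    simp only [Finset.mem_insert, Finset.mem_singleton, not_or] at hi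
    apply hg
    have : (i : ℕ) ≠ 0 := fun h => hi.1 (Fin.ext h)
    have : (i : ℕ) ≠ 1 := fun h => hi.2 (Fin.ext h)
    omega

/-- **Strict likelihood comparison for exchangeable Gaussian exponents**: for `A` with
constant diagonal `a`, constant off-diagonal `b < a`, `μ < 0` and `z₁ > z₂`, with
`θ₁ = 0, θ₂ = 1, θ'₁ = 1, θ'₂ = 0` agreeing elsewhere,
`exp{(−1/2)(z−μθ)ᵀA(z−μθ)} > exp{(−1/2)(z−μθ')ᵀA(z−μθ')}`. -/
theorem gaussian_likelihood_comparison (m : ℕ) (hm : 2 ≤ m)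
    (A : Matrix (Fin m) (Fin m) ℝ) (a b : ℝ)
    (hdiag : ∀ i, A i i = a) (hoff : ∀ i j, i ≠ j → A i j = b) (hba : b < a)
    (μ : ℝ) (hμ : μ < 0) (z : Fin m → ℝ)
    (hz : z ⟨0, by omega⟩ > z ⟨1, by omega⟩)
    (θ θ' : Fin m → ℝ)
    (hθ01 : ∀ i, θ i = 0 ∨ θ i = 1) (hθ'01 : ∀ i, θ' i = 0 ∨ θ' i = 1)
    (hθ1 : θ ⟨0, by omega⟩ = 0) (hθ2 : θ ⟨1, by omega⟩ = 1)
    (hθ'1 : θ' ⟨0, by omega⟩ = 1) (hθ'2 : θ' ⟨1, by omega⟩ = 0)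
    (hagree : ∀ i : Fin m, 2 ≤ (i : ℕ) → θ i = θ' i) :
    Real.exp ((-(1 : ℝ) / 2) * dotProduct (z - μ • θ) (A.mulVec (z - μ • θ)))
      > Real.exp ((-(1 : ℝ) / 2) *
          dotProduct (z - μ • θ') (A.mulVec (z - μ • θ'))) := by
  set u : Fin m → ℝ := z - μ • θ with hu
  set v : Fin m → ℝ := z - μ • θ' with hv
  set i0 : Fin m := ⟨0, by omega⟩ with hi0
  set i1 : Fin m := ⟨1, by omega⟩ with hi1
  have hup : ∀ i, u i = z i - μ * θ i := fun i => rfl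
  have hvp : ∀ i, v i = z i - μ * θ' i := fun i => rfl
  have huv : ∀ i : Fin m, 2 ≤ (i : ℕ) → u i = v i := by
    intro i hi; rw [hup, hvp, hagree i hi]
  have hS : (∑ i, u i) = ∑ i, v i := by
    have h := sum_two hm (fun i => u i - v i)
      (fun i hi => by show u i - v i = 0; rw [huv i hi]; ring)
    rw [Finset.sum_sub_distrib] at h
    have e0 : u i0 - v i0 = μ := by rw [hup, hvp, hθ1, hθ'1]; ring
    have e1 : u i1 - v i1 = -μ := by rw [hup, hvp, hθ2, hθ'2]; ring
    linarith [h, e0, e1]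
  have hQ : (∑ i, u i ^ 2) - (∑ i, v i ^ 2) = 2 * μ * (z i0 - z i1) := by
    have h := sum_two hm (fun i => u i ^ 2 - v i ^ 2)
      (fun i hi => by show u i ^ 2 - v i ^ 2 = 0; rw [huv i hi]; ring)
    rw [Finset.sum_sub_distrib] at h
    have e0 : u i0 ^ 2 - v i0 ^ 2 = 2 * μ * z i0 - μ ^ 2 := by
      rw [hup, hvp, hθ1, hθ'1]; ring
    have e1 : u i1 ^ 2 - v i1 ^ 2 = -(2 * μ * z i1) + μ ^ 2 := by
      rw [hup, hvp, hθ2, hθ'2]; ring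
    linarith [h, e0, e1]
  rw [gt_iff_lt, Real.exp_lt_exp]
  rw [quad_form_eq A a b hdiag hoff u, quad_form_eq A a b hdiag hoff v, hS]
  have h1 : 2 * μ * (z i0 - z i1) < 0 := by
    have hz' : z i0 - z i1 > 0 := by rw [hi0, hi1]; linarith [hz]
    nlinarith
  nlinarith [hQ, hba, h1]
end
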